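/- Let μ be a locally determined positive measure on Σ and F : Ω → X strongly μ-measurable. Then F is Bochner integrable if and only if F is locally Bochner integrable and the vector measure ν_F has bounded variation. -/

import Mathlib

open MeasureTheory ENNReal
open scoped ENNReal

noncomputable section

variable {Ω : Type*} [MeasurableSpace Ω]
variable {X : Type*} [NormedAddCommGroup X] [NormedSpace ℝ X] [CompleteSpace X]

/-- `F` is weakly `μ`-measurable. -/
def WeaklyMeasurable (μ : Measure Ω) (F : Ω → X) : Prop :=
  ∀ x' : StrongDual ℝ X, AEStronglyMeasurable (fun t => x' (F t)) μ

/-- `F` is Dunford integrable. -/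
def DunfordIntegrable (μ : Measure Ω) (F : Ω → X) : Prop :=
  WeaklyMeasurable μ F ∧ ∀ x' : StrongDual ℝ X, Integrable (fun t => x' (F t)) μ

/-- The Dunford norm `sup_{‖x*‖ ≤ 1} ∫ |⟨F, x*⟩| dμ` (in `ℝ≥0∞`). -/
def dunfordNorm (μ : Measure Ω) (F : Ω → X) : ℝ≥0∞ :=
  ⨆ (x' : StrongDual ℝ X) (_ : ‖x'‖ ≤ 1), ∫⁻ t, ENNReal.ofReal |x' (F t)| ∂μ

/-- `x` is the Pettis integral of `F` over `A`. -/
def IsPettisIntegralOn (μ : Measure Ω) (F : Ω → X) (A : Set Ω) (x : X) : Prop :=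
  ∀ x' : StrongDual ℝ X, x' x = ∫ t in A, x' (F t) ∂μ

/-- `F` is Pettis integrable. -/
def PettisIntegrable (μ : Measure Ω) (F : Ω → X) : Prop :=
  DunfordIntegrable μ F ∧ ∀ A : Set Ω, MeasurableSet A → ∃ x : X, IsPettisIntegralOn μ F A x

-- The Pettis integral of `F` over `A` (junk value `0` if it does not exist).
open Classical in
def pettisIntegral (μ : Measure Ω) (F : Ω → X) (A : Set Ω) : X :=
  if h : ∃ x : X, IsPettisIntegralOn μ F A x then h.choose else 0

/-- The δ-ring `Σ^f` of measurable sets of finite measure. -/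
def finiteMeasureSets (μ : Measure Ω) : Set (Set Ω) :=
  {B | MeasurableSet B ∧ μ B < ∞}

/-- `F` is locally Pettis integrable. -/
def LocPettisIntegrable (μ : Measure Ω) (F : Ω → X) : Prop :=
  WeaklyMeasurable μ F ∧ ∀ B ∈ finiteMeasureSets μ, PettisIntegrable μ (B.indicator F)

/-- `F` is locally Bochner integrable. -/
def LocBochnerIntegrable (μ : Measure Ω) (F : Ω → X) : Prop :=
  AEStronglyMeasurable F μ ∧ ∀ B ∈ finiteMeasureSets μ, Integrable (B.indicator F) μ

/-- The variation of a scalar set function `lam` defined on a δ-ring `R`,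
evaluated at `A`: the supremum of `Σ_j |lam A_j|` over finite disjoint families
of members of `R` contained in `A`. -/
def scalarVariation (R : Set (Set Ω)) (lam : Set Ω → ℝ) (A : Set Ω) : ℝ≥0∞ :=
  ⨆ (P : Finset (Set Ω)) (_ : ∀ B ∈ P, B ∈ R ∧ B ⊆ A)
    (_ : (P : Set (Set Ω)).PairwiseDisjoint id), ∑ B ∈ P, ENNReal.ofReal |lam B|

/-- The variation of a vector set function `ν` defined on a δ-ring `R`. -/
def vectorVariation (R : Set (Set Ω)) (ν : Set Ω → X) (A : Set Ω) : ℝ≥0∞ :=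
  ⨆ (P : Finset (Set Ω)) (_ : ∀ B ∈ P, B ∈ R ∧ B ⊆ A)
    (_ : (P : Set (Set Ω)).PairwiseDisjoint id), ∑ B ∈ P, ENNReal.ofReal ‖ν B‖

/-- The semivariation of a vector set function `ν` defined on a δ-ring `R`. -/
def semivariation (R : Set (Set Ω)) (ν : Set Ω → X) (A : Set Ω) : ℝ≥0∞ :=
  ⨆ (x' : StrongDual ℝ X) (_ : ‖x'‖ ≤ 1),
    scalarVariation R (fun B => x' (ν B)) A

/-- `μ` is semi-finite. -/
def SemiFinite (μ : Measure Ω) : Prop :=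
  ∀ A : Set Ω, MeasurableSet A → 0 < μ A →
    ∃ B ⊆ A, MeasurableSet B ∧ 0 < μ B ∧ μ B < ∞

/-- `μ` is locally determined: it is semi-finite and a set is measurable as soon as
its intersection with every finite-measure set is measurable. -/
def LocallyDetermined (μ : Measure Ω) : Prop :=
  SemiFinite μ ∧ ∀ A : Set Ω,
    (∀ B ∈ finiteMeasureSets μ, MeasurableSet (A ∩ B)) → MeasurableSet A


/-- In a semi-finite measure space, a measurable set of infinite measure contains
measurable subsets of arbitrarily large finite measure. -/
lemma SemiFinite.exists_between {μ : Measure Ω} (hsf : SemiFinite μ) {A : Set Ω}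
    (hA : MeasurableSet A) (hAinf : μ A = ∞) {r : ℝ≥0∞} (hr : r ≠ ∞) :
    ∃ B ⊆ A, MeasurableSet B ∧ r < μ B ∧ μ B < ∞ := by
  set S : Set (Set Ω) := {B | B ⊆ A ∧ MeasurableSet B ∧ μ B < ∞} with hSdef
  set T : ℝ≥0∞ := ⨆ B ∈ S, μ B with hTdef
  have hmemT : ∀ B ∈ S, μ B ≤ T := fun B hB => le_iSup₂ (f := fun (B : Set Ω) (_ : B ∈ S) => μ B) B hB
  have hT : T = ∞ := by
    by_contra hT
    have hTlt : T < ∞ := lt_top_iff_ne_top.2 hT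
    have hT0 : 0 < T := by
      obtain ⟨D, hDA, hDm, hD0, hDfin⟩ := hsf A hA (by rw [hAinf]; exact ENNReal.zero_lt_top)
      exact lt_of_lt_of_le hD0 (hmemT D ⟨hDA, hDm, hDfin⟩)
    have hBn : ∀ n : ℕ, ∃ B, B ∈ S ∧ T - (n : ℝ≥0∞)⁻¹ < μ B := by
      intro n
      by_contra h
      push_neg at h
      have : T ≤ T - (n : ℝ≥0∞)⁻¹ := iSup₂_le fun B hB => h B hB
      exact absurd (lt_of_le_of_lt this
        (ENNReal.sub_lt_self hT hT0.ne' (ENNReal.inv_ne_zero.2 (ENNReal.natCast_ne_top n)))) (lt_irrefl _)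
    choose B hBS hBlt using hBn
    have hBsubA : ∀ n, B n ⊆ A := fun n => (hBS n).1
    have hBm : ∀ n, MeasurableSet (B n) := fun n => (hBS n).2.1
    have hBfin : ∀ n, μ (B n) < ∞ := fun n => (hBS n).2.2
    set C : Set Ω := ⋃ k, B k with hCdef
    have hCm : MeasurableSet C := MeasurableSet.iUnion hBm
    have hAccS : ∀ K, Set.accumulate B K ∈ S := by
      intro K
      refine ⟨Set.iUnion₂_subset fun k _ => hBsubA k, ?_, ?_⟩
      · exact MeasurableSet.biUnion (Set.to_countable _) fun k _ => hBm k
      · exact measure_biUnion_lt_top (Set.finite_Iic K) fun k _ => hBfin k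
    have hCfin : μ C ≤ T := by
      rw [hCdef, measure_iUnion_eq_iSup_accumulate]
      exact iSup_le fun K => hmemT _ (hAccS K)
    have hACpos : 0 < μ (A \ C) := by
      rcases eq_zero_or_pos (μ (A \ C)) with h0 | h
      · exfalso
        have : μ A ≤ μ C + μ (A \ C) := by
          refine le_trans (measure_mono ?_) (measure_union_le _ _)
          intro t ht
          by_cases htC : t ∈ C
          · exact Or.inl htC
          · exact Or.inr ⟨ht, htC⟩
        rw [h0, add_zero] at this
        exact absurd (le_trans this hCfin) (by rw [hAinf]; exact not_le.2 hTlt)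
      · exact h
    obtain ⟨D, hDA, hDm, hD0, hDfin⟩ := hsf (A \ C) (hA.diff hCm) hACpos
    obtain ⟨n, hn⟩ := ENNReal.exists_inv_nat_lt hD0.ne'
    set E : Set Ω := Set.accumulate B n ∪ D with hEdef
    have hES : E ∈ S := by
      refine ⟨Set.union_subset (hAccS n).1 (hDA.trans Set.diff_subset), (hAccS n).2.1.union hDm, ?_⟩
      exact lt_of_le_of_lt (measure_union_le _ _) (ENNReal.add_lt_top.2 ⟨(hAccS n).2.2, hDfin⟩)
    have hdisj : Disjoint (Set.accumulate B n) D := by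
      have hsubC : Set.accumulate B n ⊆ C :=
        Set.iUnion₂_subset fun k _ => Set.subset_iUnion B k
      exact Disjoint.mono hsubC hDA Set.disjoint_sdiff_right
    have hEmeas : μ E = μ (Set.accumulate B n) + μ D := measure_union hdisj hDm
    have : T < μ E := by
      calc T ≤ T - (n : ℝ≥0∞)⁻¹ + (n : ℝ≥0∞)⁻¹ := le_tsub_add
        _ < μ (Set.accumulate B n) + μ D :=
          ENNReal.add_lt_add (lt_of_lt_of_le (hBlt n) (measure_mono (Set.subset_accumulate))) hn
        _ = μ E := hEmeas.symm
    exact absurd (hmemT E hES) (not_le.2 this)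
  have : r < T := by rw [hT]; exact lt_top_iff_ne_top.2 hr
  rw [hTdef, lt_iSup_iff] at this
  obtain ⟨B, hB⟩ := this
  rw [lt_iSup_iff] at hB
  obtain ⟨hBS, hrB⟩ := hB
  exact ⟨B, hBS.1, hBS.2.1, hrB, hBS.2.2⟩

/-- For a semi-finite measure, a lintegral bound on all finite-measure sets
gives a global bound. -/
lemma SemiFinite.lintegral_le {μ : Measure Ω} (hsf : SemiFinite μ) {g : Ω → ℝ≥0∞}
    (hg : Measurable g) {V : ℝ≥0∞}
    (hV : ∀ B : Set Ω, MeasurableSet B → μ B < ∞ → ∫⁻ t in B, g t ∂μ ≤ V) :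
    ∫⁻ t, g t ∂μ ≤ V := by
  rcases eq_top_or_lt_top V with hVtop | hVfin
  · rw [hVtop]; exact le_top
  rw [lintegral_eq_iSup_eapprox_lintegral hg]
  refine iSup_le fun n => ?_
  set s : SimpleFunc Ω ℝ≥0∞ := SimpleFunc.eapprox g n with hsdef
  have hs_le : ∀ a, s a ≤ g a := fun a => by
    rw [← SimpleFunc.iSup_eapprox_apply hg a]
    exact le_iSup (fun n => SimpleFunc.eapprox g n a) n
  have hfin : ∀ c, c ≠ 0 → μ (s ⁻¹' {c}) < ∞ := by
    intro c hc
    by_contra hinf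
    rw [not_lt, top_le_iff] at hinf
    have hrne : V / c ≠ ∞ := (ENNReal.div_lt_top hVfin.ne hc).ne
    obtain ⟨B, hBsub, hBm, hBlt, hBfin⟩ :=
      hsf.exists_between (s.measurableSet_fiber c) hinf hrne
    have hVlt : V < μ B * c := by
      rw [← ENNReal.div_lt_iff (Or.inl hc) (Or.inr hVfin.ne)]
      exact hBlt
    have : μ B * c ≤ ∫⁻ t in B, g t ∂μ := by
      calc μ B * c = ∫⁻ _ in B, c ∂μ := by rw [setLIntegral_const, mul_comm]
        _ ≤ ∫⁻ t in B, g t ∂μ := by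
          refine setLIntegral_mono hg fun t ht => ?_
          have : s t = c := hBsub ht
          rw [← this]; exact hs_le t
    exact absurd (le_trans this (hV B hBm hBfin)) (not_le.2 hVlt)
  set S₀ : Set Ω := ⋃ c ∈ (s.range.filter (fun c => c ≠ 0)), s ⁻¹' {c} with hS₀
  have hS₀m : MeasurableSet S₀ :=
    Finset.measurableSet_biUnion _ fun c _ => s.measurableSet_fiber c
  have hS₀fin : μ S₀ < ∞ := by
    refine lt_of_le_of_lt (measure_biUnion_finset_le _ _) ?_
    refine ENNReal.sum_lt_top.2 fun c hcmem => ?_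
    exact hfin c (Finset.mem_filter.1 hcmem).2
  have heq : ∀ t, s t = S₀.indicator (⇑s) t := by
    intro t
    by_cases h : t ∈ S₀
    · rw [Set.indicator_of_mem h]
    · rw [Set.indicator_of_notMem h]
      by_contra hne
      exact h (Set.mem_biUnion (Finset.mem_filter.2 ⟨s.mem_range_self t, hne⟩) rfl)
  calc s.lintegral μ = ∫⁻ t, s t ∂μ := (s.lintegral_eq_lintegral μ).symm
    _ = ∫⁻ t, S₀.indicator (⇑s) t ∂μ := by exact lintegral_congr heq
    _ = ∫⁻ t in S₀, s t ∂μ := lintegral_indicator hS₀m _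
    _ ≤ ∫⁻ t in S₀, g t ∂μ := lintegral_mono fun t => hs_le t
    _ ≤ V := hV S₀ hS₀m hS₀fin

/-- Variation inequality: on every finite-measure set `B` on which `F` is Bochner
integrable, the integral of `‖F‖` is bounded by the variation of `ν_F`. -/
lemma lintegral_norm_le_vectorVariation {μ : Measure Ω} {F : Ω → X} {B : Set Ω}
    (hB : MeasurableSet B) (hBfin : μ B < ∞) (hint : Integrable (B.indicator F) μ) :
    ∫⁻ t in B, ‖F t‖₊ ∂μ ≤
      vectorVariation (finiteMeasureSets μ) (fun A => ∫ t in A, F t ∂μ) Set.univ := by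
  classical
  set V := vectorVariation (finiteMeasureSets μ) (fun A => ∫ t in A, F t ∂μ) Set.univ with hVdef
  refine ENNReal.le_of_forall_pos_le_add fun ε hε hVtop => ?_
  have hε2 : ((ε : ℝ≥0∞) / 2) ≠ 0 := by
    simp [ENNReal.div_eq_zero_iff, hε.ne']
  obtain ⟨s, hs, _⟩ := (memLp_one_iff_integrable.mpr hint).exists_simpleFunc_eLpNorm_sub_lt
    ENNReal.one_ne_top hε2
  have hsdiff : ∫⁻ t, ‖B.indicator F t - s t‖₊ ∂μ < (ε : ℝ≥0∞) / 2 := by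
    rw [eLpNorm_one_eq_lintegral_enorm] at hs
    exact hs
  have hFs : ∫⁻ t in B, ‖F t - s t‖₊ ∂μ < (ε : ℝ≥0∞) / 2 := by
    refine lt_of_le_of_lt ?_ hsdiff
    calc ∫⁻ t in B, ‖F t - s t‖₊ ∂μ = ∫⁻ t in B, ‖B.indicator F t - s t‖₊ ∂μ := by
          refine setLIntegral_congr_fun hB (fun t ht => ?_)
          rw [Set.indicator_of_mem ht]
      _ ≤ ∫⁻ t, ‖B.indicator F t - s t‖₊ ∂μ := setLIntegral_le_lintegral _ _
  have hFB : IntegrableOn F B μ := (integrable_indicator_iff hB).1 hint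
  set A : X → Set Ω := fun c => s ⁻¹' {c} ∩ B with hAdef
  have hAmeas : ∀ c, MeasurableSet (A c) := fun c => (s.measurableSet_fiber c).inter hB
  have hAfin : ∀ c, μ (A c) < ∞ :=
    fun c => lt_of_le_of_lt (measure_mono Set.inter_subset_right) hBfin
  have hAsub : ∀ c, A c ⊆ B := fun c => Set.inter_subset_right
  have hAdisj : ∀ c c', c ≠ c' → Disjoint (A c) (A c') := by
    intro c c' hne
    rw [Set.disjoint_left]
    rintro t ⟨ht, -⟩ ⟨ht', -⟩
    exact hne ((Set.mem_singleton_iff.1 ht).symm.trans (Set.mem_singleton_iff.1 ht'))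
  have hsint : ∀ c, ∫ t in A c, s t ∂μ = (μ (A c)).toReal • c := by
    intro c
    rw [setIntegral_congr_fun (hAmeas c) (fun t ht => (Set.mem_singleton_iff.1 ht.1 : s t = c))]
    exact setIntegral_const c
  have hkey : ∀ c, (‖c‖₊ : ℝ≥0∞) * μ (A c) ≤
      ENNReal.ofReal ‖∫ t in A c, F t ∂μ‖ + ∫⁻ t in A c, ‖F t - s t‖₊ ∂μ := by
    intro c
    have h1 : (‖c‖₊ : ℝ≥0∞) * μ (A c) = ENNReal.ofReal ‖∫ t in A c, s t ∂μ‖ := by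
      rw [hsint c, norm_smul, Real.norm_eq_abs, abs_of_nonneg ENNReal.toReal_nonneg,
        ENNReal.ofReal_mul ENNReal.toReal_nonneg, ENNReal.ofReal_toReal (hAfin c).ne,
        ofReal_norm, mul_comm]; rfl
    have hsi : IntegrableOn (⇑s) (A c) μ := by
      refine (integrableOn_const (hAfin c).ne : IntegrableOn (fun _ => c) (A c) μ).congr ?_
      exact ((ae_restrict_iff' (hAmeas c)).2 (ae_of_all _
        fun t ht => (Set.mem_singleton_iff.1 ht.1 : s t = c).symm))
    have hFi : IntegrableOn F (A c) μ := hFB.mono_set (hAsub c)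
    have h2 : ∫ t in A c, s t ∂μ = (∫ t in A c, F t ∂μ) + ∫ t in A c, (s t - F t) ∂μ := by
      rw [integral_sub hsi hFi]; abel
    rw [h1, h2]
    calc ENNReal.ofReal ‖(∫ t in A c, F t ∂μ) + ∫ t in A c, (s t - F t) ∂μ‖
        ≤ ENNReal.ofReal (‖∫ t in A c, F t ∂μ‖ + ‖∫ t in A c, (s t - F t) ∂μ‖) :=
          ENNReal.ofReal_le_ofReal (norm_add_le _ _)
      _ = ENNReal.ofReal ‖∫ t in A c, F t ∂μ‖ + ENNReal.ofReal ‖∫ t in A c, (s t - F t) ∂μ‖ :=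
          ENNReal.ofReal_add (norm_nonneg _) (norm_nonneg _)
      _ ≤ ENNReal.ofReal ‖∫ t in A c, F t ∂μ‖ + ∫⁻ t in A c, ‖F t - s t‖₊ ∂μ := by
          refine add_le_add_right ?_ _
          rw [ofReal_norm]
          refine le_trans (enorm_integral_le_lintegral_enorm _) ?_
          refine le_of_eq (lintegral_congr fun t => ?_)
          rw [← nnnorm_neg]; simp; rfl
  have hLHS : ∫⁻ t in B, ‖s t‖₊ ∂μ = ∑ c ∈ s.range, (‖c‖₊ : ℝ≥0∞) * μ (A c) := by
    have hmap : (fun t => (‖s t‖₊ : ℝ≥0∞)) = ⇑(s.map fun x => (‖x‖₊ : ℝ≥0∞)) := by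
      ext t; simp [SimpleFunc.coe_map]
    rw [hmap, (s.map fun x => (‖x‖₊ : ℝ≥0∞)).lintegral_eq_lintegral (μ.restrict B),
      SimpleFunc.map_lintegral]
    refine Finset.sum_congr rfl fun c _ => ?_
    rw [Measure.restrict_apply (s.measurableSet_fiber c)]
  have h2nd : ∑ c ∈ s.range, ∫⁻ t in A c, ‖F t - s t‖₊ ∂μ ≤ ∫⁻ t in B, ‖F t - s t‖₊ ∂μ := by
    have hdisj : Set.PairwiseDisjoint (↑s.range) A := fun c _ c' _ hne => hAdisj c c' hne
    rw [← lintegral_biUnion_finset hdisj (fun c _ => hAmeas c)]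
    exact lintegral_mono' (Measure.restrict_mono (Set.iUnion₂_subset fun c _ => hAsub c) le_rfl)
      le_rfl
  have h1st : ∑ c ∈ s.range, ENNReal.ofReal ‖∫ t in A c, F t ∂μ‖ ≤ V := by
    have hzero : ∑ c ∈ s.range, ENNReal.ofReal ‖∫ t in A c, F t ∂μ‖
        = ∑ c ∈ s.range.filter (fun c => (A c).Nonempty),
            ENNReal.ofReal ‖∫ t in A c, F t ∂μ‖ := by
      refine (Finset.sum_filter_of_ne fun c _ hne => ?_).symm
      by_contra hempty
      rw [Set.not_nonempty_iff_eq_empty] at hempty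
      apply hne
      rw [hempty, Measure.restrict_empty, integral_zero_measure, norm_zero, ENNReal.ofReal_zero]
    have hinj : ∀ c ∈ s.range.filter (fun c => (A c).Nonempty),
        ∀ c' ∈ s.range.filter (fun c => (A c).Nonempty), A c = A c' → c = c' := by
      intro c hc c' _ h
      obtain ⟨t, ht⟩ := (Finset.mem_filter.1 hc).2
      have ht' : t ∈ A c' := h ▸ ht
      exact (Set.mem_singleton_iff.1 ht.1).symm.trans (Set.mem_singleton_iff.1 ht'.1)
    have hsumP : ∑ c ∈ s.range.filter (fun c => (A c).Nonempty),
          ENNReal.ofReal ‖∫ t in A c, F t ∂μ‖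
        = ∑ E ∈ (s.range.filter (fun c => (A c).Nonempty)).image A,
            ENNReal.ofReal ‖∫ t in E, F t ∂μ‖ :=
      (Finset.sum_image (f := fun E => ENNReal.ofReal ‖∫ t in E, F t ∂μ‖) hinj).symm
    have hP1 : ∀ E ∈ (s.range.filter (fun c => (A c).Nonempty)).image A,
        E ∈ finiteMeasureSets μ ∧ E ⊆ Set.univ := by
      intro E hE
      obtain ⟨c, _, rfl⟩ := Finset.mem_image.1 hE
      exact ⟨⟨hAmeas c, hAfin c⟩, Set.subset_univ _⟩
    have hP2 : (↑((s.range.filter (fun c => (A c).Nonempty)).image A) :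
        Set (Set Ω)).PairwiseDisjoint id := by
      intro E hE E' hE' hne
      rw [Finset.mem_coe, Finset.mem_image] at hE hE'
      obtain ⟨c, hc, rfl⟩ := hE
      obtain ⟨c', hc', rfl⟩ := hE'
      exact hAdisj c c' (fun h => hne (by rw [h]))
    rw [hzero, hsumP, hVdef, vectorVariation]
    exact le_iSup_of_le _ (le_iSup_of_le hP1 (le_iSup_of_le hP2 le_rfl))
  have hmeas_s : Measurable fun t => (‖s t‖₊ : ℝ≥0∞) := by
    have hmap : (fun t => (‖s t‖₊ : ℝ≥0∞)) = ⇑(s.map fun x => (‖x‖₊ : ℝ≥0∞)) := by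
      ext t; simp [SimpleFunc.coe_map]
    rw [hmap]; exact SimpleFunc.measurable _
  calc ∫⁻ t in B, ‖F t‖₊ ∂μ
      ≤ ∫⁻ t in B, ((‖s t‖₊ : ℝ≥0∞) + (‖F t - s t‖₊ : ℝ≥0∞)) ∂μ := by
        refine lintegral_mono fun t => ?_
        rw [← ENNReal.coe_add]
        exact ENNReal.coe_le_coe.2 (by
          calc ‖F t‖₊ = ‖s t + (F t - s t)‖₊ := by congr 1; abel
            _ ≤ ‖s t‖₊ + ‖F t - s t‖₊ := nnnorm_add_le _ _)
    _ = (∫⁻ t in B, ‖s t‖₊ ∂μ) + ∫⁻ t in B, ‖F t - s t‖₊ ∂μ := lintegral_add_left hmeas_s _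
    _ ≤ (∑ c ∈ s.range, (‖c‖₊ : ℝ≥0∞) * μ (A c)) + (ε : ℝ≥0∞) / 2 := by
        rw [hLHS]; exact add_le_add_right hFs.le _
    _ ≤ ((∑ c ∈ s.range, ENNReal.ofReal ‖∫ t in A c, F t ∂μ‖)
          + ∑ c ∈ s.range, ∫⁻ t in A c, ‖F t - s t‖₊ ∂μ) + (ε : ℝ≥0∞) / 2 := by
        refine add_le_add_left ?_ _
        rw [← Finset.sum_add_distrib]
        exact Finset.sum_le_sum fun c _ => hkey c
    _ ≤ (V + (ε : ℝ≥0∞) / 2) + (ε : ℝ≥0∞) / 2 := by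
        refine add_le_add_left (add_le_add h1st (le_trans h2nd hFs.le)) _
    _ = V + ε := by rw [add_assoc, ENNReal.add_halves]

/-- `F` is Bochner integrable iff it is locally Bochner integrable
and `ν_F` has bounded variation. -/
theorem stmt12 (μ : Measure Ω) (hμ : LocallyDetermined μ)
    (F : Ω → X) (hmeas : AEStronglyMeasurable F μ) :
    Integrable F μ ↔
      (LocBochnerIntegrable μ F ∧
        vectorVariation (finiteMeasureSets μ) (fun B => ∫ t in B, F t ∂μ) Set.univ
          < ∞) := by
  constructor
  · intro hF
    refine ⟨⟨hmeas, fun B hB => hF.indicator hB.1⟩, ?_⟩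
    have hbound : vectorVariation (finiteMeasureSets μ) (fun B => ∫ t in B, F t ∂μ) Set.univ
        ≤ ∫⁻ t, ‖F t‖₊ ∂μ := by
      refine iSup_le fun P => iSup_le fun hP => iSup_le fun hPd => ?_
      calc ∑ B ∈ P, ENNReal.ofReal ‖∫ t in B, F t ∂μ‖
          ≤ ∑ B ∈ P, ∫⁻ t in B, ‖F t‖₊ ∂μ := by
            refine Finset.sum_le_sum fun B _ => ?_
            rw [ofReal_norm]
            exact enorm_integral_le_lintegral_enorm _
        _ = ∫⁻ t in ⋃ B ∈ P, B, ‖F t‖₊ ∂μ :=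
            (lintegral_biUnion_finset (by exact hPd) (fun B hB => (hP B hB).1.1) _).symm
        _ ≤ ∫⁻ t, ‖F t‖₊ ∂μ := setLIntegral_le_lintegral _ _
    exact lt_of_le_of_lt hbound hF.2
  · rintro ⟨⟨_, hloc⟩, hV⟩
    refine ⟨hmeas, ?_⟩
    have haem : AEMeasurable (fun t => (‖F t‖₊ : ℝ≥0∞)) μ := hmeas.enorm
    set g : Ω → ℝ≥0∞ := haem.mk _ with hgdef
    have hgmeas : Measurable g := haem.measurable_mk
    have hle : ∫⁻ t, g t ∂μ ≤
        vectorVariation (finiteMeasureSets μ) (fun B => ∫ t in B, F t ∂μ) Set.univ := by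
      refine hμ.1.lintegral_le hgmeas fun B hBm hBf => ?_
      have : ∫⁻ t in B, g t ∂μ = ∫⁻ t in B, ‖F t‖₊ ∂μ :=
        lintegral_congr_ae (ae_restrict_of_ae haem.ae_eq_mk.symm)
      rw [this]
      exact lintegral_norm_le_vectorVariation hBm hBf (hloc B ⟨hBm, hBf⟩)
    have hFeq : ∫⁻ t, ‖F t‖₊ ∂μ = ∫⁻ t, g t ∂μ := lintegral_congr_ae haem.ae_eq_mk
    rw [hasFiniteIntegral_def, show ∫⁻ a, ‖F a‖ₑ ∂μ = ∫⁻ t, ‖F t‖₊ ∂μ from rfl, hFeq]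
    exact lt_of_le_of_lt hle hV

end
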